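/- Let D(x) be the set of nonzero integral flows with connected support in a cone V(x) of flows, and P(x) = conv(D(x) + V(x)). If v = d + e with d ∈ D(x), e ∈ V(x), and v is an extremal point of P(x), then e = 0; hence every extremal point of P(x) is a disc-vector. -/

import Mathlib

/-- A flow on the complete digraph on `n` vertices. -/
def IsFlow {n : ℕ} (f : Fin n → Fin n → ℝ) : Prop :=
  (∀ i j, 0 ≤ f i j) ∧ ∀ i, (∑ j, f j i) = ∑ j, f i j

/-- Outflow at a vertex. -/
def outflow {n : ℕ} (f : Fin n → Fin n → ℝ) (i : Fin n) : ℝ := ∑ j, f i j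

/-- The cone `V(x)`. -/
def Vx {n k : ℕ} (x : Fin k → Fin n → ℤ) : Set (Fin n → Fin n → ℝ) :=
  {f | IsFlow f ∧ ∀ i, (∑ j, (x i j : ℝ) * outflow f j) = 0}

/-- A vertex is incident to the support of `f`. -/
def Incident {n : ℕ} (f : Fin n → Fin n → ℝ) (a : Fin n) : Prop :=
  ∃ c, 0 < f a c ∨ 0 < f c a

/-- The support of `f` is (strongly) connected. -/
def ConnectedSupport {n : ℕ} (f : Fin n → Fin n → ℝ) : Prop :=
  ∀ a b, Incident f a → Incident f b →
    Relation.ReflTransGen (fun u v => 0 < f u v) a b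

/-- The set `D(x)` of disc-vectors: nonzero integral elements of `V(x)` with connected
support. -/
def Dx {n k : ℕ} (x : Fin k → Fin n → ℤ) : Set (Fin n → Fin n → ℝ) :=
  {f | f ∈ Vx x ∧ f ≠ 0 ∧ (∀ i j, ∃ z : ℤ, f i j = z) ∧ ConnectedSupport f}

/-- if `v = d + e` with `d ∈ D(x)`, `e ∈ V(x)` is an extremal point of
`P(x) = conv(D(x) + V(x))`, then `e = 0`; hence every extremal point of `P(x)` arising
this way is a disc-vector. -/
theorem extreme_point_is_disc_vector (n k : ℕ) (x : Fin k → Fin n → ℤ)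
    (v d e : Fin n → Fin n → ℝ) (hd : d ∈ Dx x) (he : e ∈ Vx x) (hv : v = d + e)
    (hext : v ∈ Set.extremePoints ℝ
      (convexHull ℝ {g | ∃ a ∈ Dx x, ∃ b ∈ Vx x, g = a + b})) :
    e = 0 ∧ v ∈ Dx x := by
  obtain ⟨hflow, hcon⟩ := he
  have h0 : (0 : Fin n → Fin n → ℝ) ∈ Vx x := by
    refine ⟨⟨fun i j => le_refl 0, fun i => rfl⟩, fun i => ?_⟩
    simp [outflow]
  have h2e : ((2 : ℝ) • e) ∈ Vx x := by
    refine ⟨⟨fun i j => ?_, fun i => ?_⟩, fun i => ?_⟩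
    · have := hflow.1 i j; simp; positivity
    · simp only [Pi.smul_apply, smul_eq_mul, ← Finset.mul_sum]
      rw [hflow.2 i]
    · simp only [outflow, Pi.smul_apply, smul_eq_mul, ← Finset.mul_sum]
      have : ∀ j, (x i j : ℝ) * (2 * ∑ l, e j l) = 2 * ((x i j : ℝ) * ∑ l, e j l) := by
        intro j; ring
      rw [Finset.sum_congr rfl fun j _ => this j, ← Finset.mul_sum]
      have := hcon i
      simp only [outflow] at this
      rw [this, mul_zero]
  have hdS : d ∈ {g | ∃ a ∈ Dx x, ∃ b ∈ Vx x, g = a + b} := ⟨d, hd, 0, h0, by simp⟩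
  have hvS : d + (2 : ℝ) • e ∈ {g | ∃ a ∈ Dx x, ∃ b ∈ Vx x, g = a + b} :=
    ⟨d, hd, (2 : ℝ) • e, h2e, rfl⟩
  have hseg : v ∈ openSegment ℝ d (d + (2 : ℝ) • e) := by
    refine ⟨1/2, 1/2, by norm_num, by norm_num, by norm_num, ?_⟩
    rw [hv]; module
  obtain ⟨-, hkey⟩ := hext
  obtain h1 := hkey (subset_convexHull ℝ _ hdS)
    (subset_convexHull ℝ _ hvS) hseg
  have he0 : e = 0 := by
    have : d + e = d := by rw [← hv, h1]
    simpa using this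
  exact ⟨he0, by rw [hv, he0, add_zero]; exact hd⟩
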